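/- For a full-rank matrix G ∈ ℝ^{m×n} (m ≥ n), the column-equilibrated matrix G Σ_c with Σ_c = diag(‖G e₁‖₂⁻¹, …, ‖G e_n‖₂⁻¹) satisfies κ₂(G Σ_c) ≤ √n · min over all invertible diagonal Σ ∈ ℝ^{n×n} of κ₂(G Σ). -/

import Mathlib

open Matrix

noncomputable def enorm' {m : ℕ} (v : Fin m → ℝ) : ℝ := Real.sqrt (∑ i, v i ^ 2)

noncomputable def frob {m n : ℕ} (A : Matrix (Fin m) (Fin n) ℝ) : ℝ :=
  Real.sqrt (∑ i, ∑ j, A i j ^ 2)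

noncomputable def specNorm {m n : ℕ} (A : Matrix (Fin m) (Fin n) ℝ) : ℝ :=
  ‖(Matrix.toEuclideanLin A).toContinuousLinearMap‖

theorem Matrix.isHermitian_transpose_mul_self {m n α : Type*} [Fintype m] [CommSemiring α]
    [StarRing α] [TrivialStar α] (A : Matrix m n α) : (Aᵀ * A).IsHermitian := by
  rw [IsHermitian, conjTranspose_eq_transpose_of_trivial, transpose_mul, transpose_transpose]

noncomputable def sigmaMax (B : Matrix (Fin 2) (Fin 2) ℝ) : ℝ :=
  Real.sqrt (max ((Matrix.isHermitian_transpose_mul_self B).eigenvalues 0)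
                 ((Matrix.isHermitian_transpose_mul_self B).eigenvalues 1))

noncomputable def sigmaMin (B : Matrix (Fin 2) (Fin 2) ℝ) : ℝ :=
  Real.sqrt (min ((Matrix.isHermitian_transpose_mul_self B).eigenvalues 0)
                 ((Matrix.isHermitian_transpose_mul_self B).eigenvalues 1))

noncomputable def sigmaMaxR {m n : ℕ} (A : Matrix (Fin m) (Fin n) ℝ) : ℝ :=
  Real.sqrt (⨆ i, (Matrix.isHermitian_transpose_mul_self A).eigenvalues i)

noncomputable def sigmaMinR {m n : ℕ} (A : Matrix (Fin m) (Fin n) ℝ) : ℝ :=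
  Real.sqrt (⨅ i, (Matrix.isHermitian_transpose_mul_self A).eigenvalues i)

noncomputable def kappaR {m n : ℕ} (A : Matrix (Fin m) (Fin n) ℝ) : ℝ :=
  sigmaMaxR A / sigmaMinR A


section vdSAux

variable {m n : ℕ}

private lemma vdS_transpose_H (A : Matrix (Fin m) (Fin n) ℝ) : (Aᴴ * A)ᵀ = Aᴴ * A := by
  have hAT : Aᴴ = Aᵀ := by ext i j; simp [conjTranspose_apply]
  rw [transpose_mul, hAT, transpose_transpose]

private lemma vdS_vecMul_H (A : Matrix (Fin m) (Fin n) ℝ) (v : Fin n → ℝ) :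
    v ᵥ* (Aᴴ * A) = (Aᴴ * A) *ᵥ v := by
  conv_lhs => rw [← vdS_transpose_H A, vecMul_transpose]

private lemma vdS_quad_eq (A : Matrix (Fin m) (Fin n) ℝ) (x : Fin n → ℝ) :
    x ⬝ᵥ ((Aᴴ * A) *ᵥ x) = ∑ j, (A *ᵥ x) j ^ 2 := by
  have hAT : Aᴴ = Aᵀ := by ext i j; simp [conjTranspose_apply]
  rw [← mulVec_mulVec, dotProduct_mulVec, hAT, vecMul_transpose, dotProduct]
  simp [pow_two]

private lemma vdS_repr_H (A : Matrix (Fin m) (Fin n) ℝ) (x : EuclideanSpace ℝ (Fin n)) (i : Fin n) :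
    (Matrix.isHermitian_transpose_mul_self A).eigenvectorBasis.repr (WithLp.toLp 2 ((Aᴴ * A) *ᵥ x)) i
      = (Matrix.isHermitian_transpose_mul_self A).eigenvalues i *
        (Matrix.isHermitian_transpose_mul_self A).eigenvectorBasis.repr x i := by
  set hA := Matrix.isHermitian_transpose_mul_self A with hhA
  rw [OrthonormalBasis.repr_apply_apply, OrthonormalBasis.repr_apply_apply]
  have h1 : ∀ (u v : EuclideanSpace ℝ (Fin n)), (inner ℝ u v : ℝ) = (u : Fin n → ℝ) ⬝ᵥ v := by
    intro u v
    simp [PiLp.inner_apply, dotProduct, mul_comm]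
  have h2 : (Aᴴ * A) *ᵥ (hA.eigenvectorBasis i) = hA.eigenvalues i • (hA.eigenvectorBasis i) :=
    hA.mulVec_eigenvectorBasis i
  rw [h1, h1]
  calc (hA.eigenvectorBasis i : Fin n → ℝ) ⬝ᵥ ((Aᴴ * A) *ᵥ x)
      = ((hA.eigenvectorBasis i : Fin n → ℝ) ᵥ* (Aᴴ * A)) ⬝ᵥ x := by rw [dotProduct_mulVec]
    _ = ((Aᴴ * A) *ᵥ (hA.eigenvectorBasis i : Fin n → ℝ)) ⬝ᵥ x := by rw [vdS_vecMul_H]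
    _ = (hA.eigenvalues i • (hA.eigenvectorBasis i : Fin n → ℝ)) ⬝ᵥ x := by rw [h2]
    _ = hA.eigenvalues i * ((hA.eigenvectorBasis i : Fin n → ℝ) ⬝ᵥ x) := smul_dotProduct _ _ _

private lemma vdS_parseval (A : Matrix (Fin m) (Fin n) ℝ) (x : EuclideanSpace ℝ (Fin n)) :
    ∑ i, (x : Fin n → ℝ) i ^ 2
      = ∑ i, ((Matrix.isHermitian_transpose_mul_self A).eigenvectorBasis.repr x i) ^ 2 := by
  set hA := Matrix.isHermitian_transpose_mul_self A
  have h1 : ∀ (u v : EuclideanSpace ℝ (Fin n)), (inner ℝ u v : ℝ) = ∑ i, u i * v i := by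
    intro u v; simp [PiLp.inner_apply, mul_comm]
  have key := hA.eigenvectorBasis.repr.inner_map_map x x
  rw [h1, h1] at key
  calc ∑ i, (x : Fin n → ℝ) i ^ 2 = ∑ i, (x : Fin n → ℝ) i * x i := by simp [pow_two]
    _ = ∑ i, hA.eigenvectorBasis.repr x i * hA.eigenvectorBasis.repr x i := key.symm
    _ = ∑ i, (hA.eigenvectorBasis.repr x i) ^ 2 := by simp [pow_two]

private lemma vdS_quad_repr (A : Matrix (Fin m) (Fin n) ℝ) (x : EuclideanSpace ℝ (Fin n)) :
    ∑ j, (A *ᵥ (x : Fin n → ℝ)) j ^ 2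
      = ∑ i, (Matrix.isHermitian_transpose_mul_self A).eigenvalues i *
          ((Matrix.isHermitian_transpose_mul_self A).eigenvectorBasis.repr x i) ^ 2 := by
  set hA := Matrix.isHermitian_transpose_mul_self A with hhA
  have h1 : ∀ (u v : EuclideanSpace ℝ (Fin n)), (inner ℝ u v : ℝ) = (u : Fin n → ℝ) ⬝ᵥ v := by
    intro u v; simp [PiLp.inner_apply, dotProduct, mul_comm]
  have key := hA.eigenvectorBasis.repr.inner_map_map x
    (WithLp.toLp 2 ((Aᴴ * A) *ᵥ x : Fin n → ℝ) : EuclideanSpace ℝ (Fin n))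
  rw [h1, h1] at key
  rw [← vdS_quad_eq]
  calc (x : Fin n → ℝ) ⬝ᵥ ((Aᴴ * A) *ᵥ x)
      = (hA.eigenvectorBasis.repr x : Fin n → ℝ) ⬝ᵥ
          (hA.eigenvectorBasis.repr (WithLp.toLp 2 ((Aᴴ * A) *ᵥ x))) := key.symm
    _ = ∑ i, hA.eigenvectorBasis.repr x i * (hA.eigenvalues i * hA.eigenvectorBasis.repr x i) := by
        rw [dotProduct]
        refine Finset.sum_congr rfl fun i _ => ?_
        rw [vdS_repr_H]
    _ = ∑ i, hA.eigenvalues i * (hA.eigenvectorBasis.repr x i) ^ 2 := by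
        refine Finset.sum_congr rfl fun i _ => ?_; ring

private lemma sum_ev_eq_trace (A : Matrix (Fin m) (Fin n) ℝ) :
    ∑ i, (Matrix.isHermitian_transpose_mul_self A).eigenvalues i = (Aᴴ * A).trace := by
  set hA := Matrix.isHermitian_transpose_mul_self A
  rw [conjTranspose_eq_transpose_of_trivial]
  exact (hA.trace_eq_sum_eigenvalues).symm

private lemma rayleigh_upper (hn : 0 < n) (A : Matrix (Fin m) (Fin n) ℝ) (x : Fin n → ℝ) :
    ∑ j, (A *ᵥ x) j ^ 2
      ≤ (⨆ i, (Matrix.isHermitian_transpose_mul_self A).eigenvalues i) * ∑ i, x i ^ 2 := by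
  haveI : Nonempty (Fin n) := ⟨⟨0, hn⟩⟩
  set hA := Matrix.isHermitian_transpose_mul_self A
  have hb : BddAbove (Set.range hA.eigenvalues) := Set.Finite.bddAbove (Set.finite_range _)
  have h := vdS_quad_repr A (WithLp.toLp 2 x)
  have h' := vdS_parseval A (WithLp.toLp 2 x)
  simp only [WithLp.ofLp_toLp] at h h'
  rw [h, h', Finset.mul_sum]
  exact Finset.sum_le_sum fun i _ =>
    mul_le_mul_of_nonneg_right (le_ciSup hb i) (sq_nonneg _)

private lemma rayleigh_lower (hn : 0 < n) (A : Matrix (Fin m) (Fin n) ℝ) (x : Fin n → ℝ) :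
    (⨅ i, (Matrix.isHermitian_transpose_mul_self A).eigenvalues i) * ∑ i, x i ^ 2
      ≤ ∑ j, (A *ᵥ x) j ^ 2 := by
  haveI : Nonempty (Fin n) := ⟨⟨0, hn⟩⟩
  set hA := Matrix.isHermitian_transpose_mul_self A
  have hb : BddBelow (Set.range hA.eigenvalues) := Set.Finite.bddBelow (Set.finite_range _)
  have h := vdS_quad_repr A (WithLp.toLp 2 x)
  have h' := vdS_parseval A (WithLp.toLp 2 x)
  simp only [WithLp.ofLp_toLp] at h h'
  rw [h, h', Finset.mul_sum]
  exact Finset.sum_le_sum fun i _ =>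
    mul_le_mul_of_nonneg_right (ciInf_le hb i) (sq_nonneg _)

private lemma exists_unit_quad (A : Matrix (Fin m) (Fin n) ℝ) (i : Fin n) :
    ∃ x : Fin n → ℝ, (∑ k, x k ^ 2 = 1) ∧
      ∑ j, (A *ᵥ x) j ^ 2 = (Matrix.isHermitian_transpose_mul_self A).eigenvalues i := by
  set hA := Matrix.isHermitian_transpose_mul_self A
  refine ⟨hA.eigenvectorBasis i, ?_, ?_⟩
  · rw [vdS_parseval A (hA.eigenvectorBasis i), OrthonormalBasis.repr_self]
    simp [EuclideanSpace.single_apply]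
  · rw [vdS_quad_repr A (hA.eigenvectorBasis i), OrthonormalBasis.repr_self]
    simp [EuclideanSpace.single_apply, Finset.sum_ite_eq, pow_two]

end vdSAux

set_option maxHeartbeats 2000000 in
theorem van_der_sluis_column_scaling {m n : ℕ} (hn : 0 < n) (hmn : n ≤ m)
    (G : Matrix (Fin m) (Fin n) ℝ) (hrank : G.rank = n) :
    ∀ Sig : Fin n → ℝ, (∀ k, Sig k ≠ 0) →
      kappaR (G * Matrix.diagonal (fun k => (enorm' (fun i => G i k))⁻¹)) ≤
        Real.sqrt n * kappaR (G * Matrix.diagonal Sig) := by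
  intro Sig hSig
  haveI : Nonempty (Fin n) := ⟨⟨0, hn⟩⟩
  classical
  -- G is injective
  have hGinj : ∀ x : Fin n → ℝ, G *ᵥ x = 0 → x = 0 := by
    have hr : Module.finrank ℝ (LinearMap.range G.mulVecLin) = n := hrank
    have h1 := G.mulVecLin.finrank_range_add_finrank_ker
    have h2 : Module.finrank ℝ (Fin n → ℝ) = n := by simp
    rw [hr, h2] at h1
    have h3 : Module.finrank ℝ (LinearMap.ker G.mulVecLin) = 0 := by omega
    have hker : LinearMap.ker G.mulVecLin = ⊥ := Submodule.finrank_eq_zero.mp h3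
    intro x hx
    have hx' : x ∈ LinearMap.ker G.mulVecLin := by
      rw [LinearMap.mem_ker, Matrix.mulVecLin_apply]; exact hx
    rw [hker] at hx'; simpa using hx'
  set c : Fin n → ℝ := fun k => enorm' (fun i => G i k) with hcdef
  have hcol : ∀ k, 0 < ∑ i, G i k ^ 2 := by
    intro k
    have hnn : 0 ≤ ∑ i, G i k ^ 2 := Finset.sum_nonneg fun i _ => sq_nonneg _
    rcases hnn.lt_or_eq with h | h
    · exact h
    · exfalso
      have hz : ∀ i, G i k = 0 := by
        intro i
        have := (Finset.sum_eq_zero_iff_of_nonneg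
          (fun i _ => sq_nonneg (G i k))).mp h.symm i (Finset.mem_univ i)
        exact pow_eq_zero_iff two_ne_zero |>.mp this
      have hcz : G *ᵥ Pi.single k 1 = 0 := by
        ext i
        rw [mulVec_single]
        simp [hz i]
      have := congrFun (hGinj _ hcz) k
      simp [Pi.single_eq_same] at this
  have hc : ∀ k, 0 < c k := fun k => Real.sqrt_pos.mpr (hcol k)
  have hc2 : ∀ k, c k ^ 2 = ∑ i, G i k ^ 2 := fun k => Real.sq_sqrt (hcol k).le
  set B := G * Matrix.diagonal (fun k => (c k)⁻¹) with hBdef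
  set A := G * Matrix.diagonal Sig with hAdef
  set d : Fin n → ℝ := fun k => (Sig k)⁻¹ * (c k)⁻¹ with hddef
  have hd : ∀ k, d k ≠ 0 := fun k =>
    mul_ne_zero (inv_ne_zero (hSig k)) (inv_ne_zero (hc k).ne')
  have hBA : B = A * Matrix.diagonal d := by
    rw [hBdef, hAdef, Matrix.mul_assoc, diagonal_mul_diagonal]
    have hfun : (fun k => (c k)⁻¹) = fun k => Sig k * d k := by
      funext k
      simp only [hddef]
      rw [← mul_assoc, mul_inv_cancel₀ (hSig k), one_mul]
    rw [hfun]
  set evB := (Matrix.isHermitian_transpose_mul_self B).eigenvalues with hevB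
  set evA := (Matrix.isHermitian_transpose_mul_self A).eigenvalues with hevA
  set sB := ⨆ i, evB i with hsB
  set tB := ⨅ i, evB i with htB
  set sA := ⨆ i, evA i with hsA
  set tA := ⨅ i, evA i with htA
  have hevBnn : ∀ i, 0 ≤ evB i := fun i => Matrix.eigenvalues_conjTranspose_mul_self_nonneg B i
  have hevAnn : ∀ i, 0 ≤ evA i := fun i => Matrix.eigenvalues_conjTranspose_mul_self_nonneg A i
  -- (i) sB ≤ n
  have hsBn : sB ≤ (n : ℝ) := by
    obtain ⟨i0, hi0⟩ := exists_eq_ciSup_of_finite (f := evB)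
    rw [hsB, ← hi0]
    calc evB i0 ≤ ∑ i, evB i :=
          Finset.single_le_sum (fun i _ => hevBnn i) (Finset.mem_univ i0)
      _ = (Bᴴ * B).trace := sum_ev_eq_trace B
      _ = (n : ℝ) := by
          have hdiag : ∀ k, (Bᴴ * B) k k = 1 := by
            intro k
            rw [mul_apply]
            have h4 : ∀ j, Bᴴ k j * B j k = (G j k) ^ 2 * ((c k)⁻¹) ^ 2 := by
              intro j
              simp only [conjTranspose_apply, hBdef, mul_diagonal, RCLike.star_def,
                starRingEnd_apply, star_trivial]
              ring
            rw [Finset.sum_congr rfl fun j _ => h4 j, ← Finset.sum_mul, ← hc2]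
            rw [inv_pow, mul_inv_cancel₀ (pow_ne_zero 2 (hc k).ne')]
          calc (Bᴴ * B).trace = ∑ k, (Bᴴ * B) k k := rfl
            _ = ∑ _k : Fin n, (1 : ℝ) := Finset.sum_congr rfl fun k _ => hdiag k
            _ = (n : ℝ) := by simp
  -- (ii) tA > 0
  have htApos : 0 < tA := by
    obtain ⟨i1, hi1⟩ := exists_eq_ciInf_of_finite (f := evA)
    rw [htA, ← hi1]
    obtain ⟨x, hx1, hx2⟩ := exists_unit_quad A i1
    have hx2' : ∑ j, (A *ᵥ x) j ^ 2 = evA i1 := hx2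
    rw [← hx2']
    have hxne : x ≠ 0 := by
      intro h
      rw [h] at hx1; simp at hx1
    have hAx : A *ᵥ x ≠ 0 := by
      rw [hAdef, ← mulVec_mulVec]
      intro h
      have h5 := hGinj _ h
      have h6 : ∀ k, Sig k * x k = 0 := by
        intro k
        have := congrFun h5 k
        simpa [mulVec_diagonal] using this
      apply hxne
      funext k
      rcases mul_eq_zero.mp (h6 k) with h7 | h7
      · exact absurd h7 (hSig k)
      · exact h7
    obtain ⟨j, hj⟩ := Function.ne_iff.mp hAx
    exact Finset.sum_pos' (fun j _ => sq_nonneg _)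
      ⟨j, Finset.mem_univ j, pow_two_pos_of_ne_zero hj⟩
  -- epsilon
  set ε := ⨅ k, (d k) ^ 2 with hεdef
  have hεle : ∀ k, ε ≤ d k ^ 2 := fun k =>
    ciInf_le (Set.Finite.bddBelow (Set.finite_range _)) k
  obtain ⟨k0, hk0⟩ := exists_eq_ciInf_of_finite (f := fun k => (d k) ^ 2)
  have hεpos : 0 < ε := by
    rw [hεdef, ← hk0]
    exact pow_two_pos_of_ne_zero (hd k0)
  -- (iii) tA * ε ≤ tB
  have htBge : tA * ε ≤ tB := by
    obtain ⟨i2, hi2⟩ := exists_eq_ciInf_of_finite (f := evB)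
    rw [htB, ← hi2]
    obtain ⟨x, hx1, hx2⟩ := exists_unit_quad B i2
    have hx2' : ∑ j, (B *ᵥ x) j ^ 2 = evB i2 := hx2
    rw [← hx2', hBA, ← mulVec_mulVec]
    set y : Fin n → ℝ := Matrix.diagonal d *ᵥ x with hydef
    have hy : ∀ k, y k = d k * x k := fun k => by
      rw [hydef, mulVec_diagonal]
    calc tA * ε = tA * (ε * ∑ k, x k ^ 2) := by rw [hx1]; ring
      _ ≤ tA * ∑ k, y k ^ 2 := by
          apply mul_le_mul_of_nonneg_left _ (le_of_lt htApos)
          rw [Finset.mul_sum]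
          apply Finset.sum_le_sum
          intro k _
          rw [hy k, mul_pow]
          exact mul_le_mul_of_nonneg_right (hεle k) (sq_nonneg _)
      _ ≤ ∑ j, (A *ᵥ y) j ^ 2 := rayleigh_lower hn A y
  -- (iv) 1 ≤ sA * ε
  have hsAε : 1 ≤ sA * ε := by
    have h8 : ∑ j, (A *ᵥ Pi.single k0 1) j ^ 2 = (Sig k0) ^ 2 * (c k0) ^ 2 := by
      have h9 : ∀ j, (A *ᵥ Pi.single k0 1) j = G j k0 * Sig k0 := by
        intro j
        simp [hAdef, mulVec_single, mul_diagonal]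
      rw [Finset.sum_congr rfl fun j _ => by rw [h9 j]]
      rw [Finset.sum_congr rfl fun j _ =>
        (by ring : (G j k0 * Sig k0) ^ 2 = Sig k0 ^ 2 * G j k0 ^ 2),
        ← Finset.mul_sum, ← hc2]
    have h10'' := rayleigh_upper hn A (Pi.single k0 1)
    have h10 : ∑ j, (A *ᵥ Pi.single k0 1) j ^ 2 ≤ sA * ∑ i, (Pi.single k0 1 : Fin n → ℝ) i ^ 2 := h10''
    rw [h8] at h10
    have h11 : ∑ i, (Pi.single k0 1 : Fin n → ℝ) i ^ 2 = 1 := by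
      simp [Pi.single_apply]
    rw [h11, mul_one] at h10
    have h12 : (Sig k0) ^ 2 * (c k0) ^ 2 * ε = 1 := by
      rw [hεdef, ← hk0, hddef]
      field_simp [hSig k0, (hc k0).ne']
    calc (1 : ℝ) = (Sig k0) ^ 2 * (c k0) ^ 2 * ε := h12.symm
      _ ≤ sA * ε := mul_le_mul_of_nonneg_right h10 hεpos.le
  have htBpos : 0 < tB := lt_of_lt_of_le (mul_pos htApos hεpos) htBge
  -- final arithmetic
  show Real.sqrt sB / Real.sqrt tB ≤ Real.sqrt n * (Real.sqrt sA / Real.sqrt tA)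
  have hsBnn : 0 ≤ sB := le_trans htBpos.le (by
    obtain ⟨i2, hi2⟩ := exists_eq_ciInf_of_finite (f := evB)
    rw [htB, ← hi2]
    exact le_ciSup (Set.Finite.bddAbove (Set.finite_range _)) i2)
  have hsAnn : 0 ≤ sA := le_trans htApos.le (by
    obtain ⟨i2, hi2⟩ := exists_eq_ciInf_of_finite (f := evA)
    rw [htA, ← hi2]
    exact le_ciSup (Set.Finite.bddAbove (Set.finite_range _)) i2)
  rw [← Real.sqrt_div hsBnn, ← Real.sqrt_div hsAnn,
    ← Real.sqrt_mul (Nat.cast_nonneg n)]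
  apply Real.sqrt_le_sqrt
  rw [← mul_div_assoc, div_le_div_iff₀ htBpos htApos]
  have e1 : sB * (tA * ε) ≤ (n : ℝ) * (tA * ε) :=
    mul_le_mul_of_nonneg_right hsBn (mul_pos htApos hεpos).le
  have e2 : (n : ℝ) * (tA * ε) ≤ (n : ℝ) * tB :=
    mul_le_mul_of_nonneg_left htBge (Nat.cast_nonneg n)
  have e3 : (n : ℝ) * tB ≤ (sA * ε) * ((n : ℝ) * tB) :=
    le_mul_of_one_le_left (mul_pos (by positivity) htBpos).le hsAε
  rw [← mul_le_mul_iff_left₀ hεpos]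
  nlinarith [e1, e2, e3]
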